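/- Let $r, k, a$ be positive integers with $a \ge 2$, $1 \le k < r$ and $r \ge (a-1)(k-1)+1$, and set $n_0 = r(a-1) + r - (a-1)(k-1) - 1 = ra - (a-1)(k-1) - 1$. Then there exist $r$-element subsets $E_1, \ldots, E_{a-1}$ of $[n_0]$ such that every $r$-element subset $T \subseteq [n_0]$ satisfies $|T \cap E_i| \ge k$ for some $i \in [a-1]$. -/

import Mathlib

lemma div_eq_iff_aux {r v x : ℕ} (hr : 0 < r) : x / r = v ↔ v * r ≤ x ∧ x < v * r + r := by
  constructor
  · rintro rfl
    refine ⟨Nat.div_mul_le_self x r, ?_⟩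
    have h1 : x / r * r + x % r = x := Nat.div_add_mod' x r
    have h2 : x % r < r := Nat.mod_lt x hr
    omega
  · rintro ⟨h1, h2⟩
    have hle : v ≤ x / r := (Nat.le_div_iff_mul_le hr).2 h1
    have hlt : x / r < v + 1 := (Nat.div_lt_iff_lt_mul hr).2 (by nlinarith)
    omega

lemma fiber_card {n r v : ℕ} (hr : 0 < r) (h : v * r + r ≤ n) :
    ((Finset.univ : Finset (Fin n)).filter (fun x => x.val / r = v)).card = r := by
  have hlt : ∀ m ∈ Finset.Ico (v * r) (v * r + r), m < n := fun m hm => by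
    simp only [Finset.mem_Ico] at hm; omega
  have : (Finset.univ : Finset (Fin n)).filter (fun x => x.val / r = v)
      = (Finset.Ico (v * r) (v * r + r)).attachFin hlt := by
    ext x
    simp [Finset.mem_attachFin, div_eq_iff_aux hr]
  rw [this, Finset.card_attachFin, Nat.card_Ico]
  omega

theorem stmt_13 (r k a : ℕ) (hk : 1 ≤ k) (hkr : k < r) (ha : 2 ≤ a)
    (hr : (a - 1) * (k - 1) + 1 ≤ r) :
    ∃ F : Fin (a - 1) → Finset (Fin (r * a - (a - 1) * (k - 1) - 1)),
      (∀ i, (F i).card = r) ∧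
      ∀ T : Finset (Fin (r * a - (a - 1) * (k - 1) - 1)),
        T.card = r → ∃ i, k ≤ (T ∩ F i).card := by
  set c := (a - 1) * (k - 1) with hc
  set n := r * a - c - 1 with hn
  have hrpos : 0 < r := by omega
  have hra : r * a = r * (a - 1) + r := by
    have h1 : a = (a - 1) + 1 := by omega
    calc r * a = r * ((a - 1) + 1) := by rw [← h1]
      _ = r * (a - 1) + r := Nat.mul_succ r (a - 1)
  have hn' : n = r * (a - 1) + (r - c - 1) := by omega
  refine ⟨fun i => Finset.univ.filter (fun x => x.val / r = i.val), fun i => ?_, fun T hT => ?_⟩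
  · apply fiber_card hrpos
    have h1 : (i.val + 1) * r ≤ (a - 1) * r := Nat.mul_le_mul_right r (by omega)
    have e1 : (i.val + 1) * r = i.val * r + r := Nat.succ_mul _ _
    have e2 : (a - 1) * r = r * (a - 1) := Nat.mul_comm _ _
    omega
  · by_contra hcon
    push_neg at hcon
    have key : T.card = ∑ v ∈ Finset.range a, (T.filter (fun x => x.val / r = v)).card := by
      apply Finset.card_eq_sum_card_fiberwise
      intro x _
      simp only [Finset.mem_range, Finset.mem_coe]
      exact Nat.div_lt_of_lt_mul (by have := x.isLt; omega)
    have hsplit : ∑ v ∈ Finset.range a, (T.filter (fun x => x.val / r = v)).card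
        = (∑ v ∈ Finset.range (a - 1), (T.filter (fun x => x.val / r = v)).card)
          + (T.filter (fun x => x.val / r = a - 1)).card := by
      have h1 : a = (a - 1) + 1 := by omega
      rw [h1, Finset.sum_range_succ]; simp only [Nat.add_sub_cancel]
    have hbound : ∀ v ∈ Finset.range (a - 1),
        (T.filter (fun x => x.val / r = v)).card ≤ k - 1 := by
      intro v hv
      rw [Finset.mem_range] at hv
      have h1 := hcon ⟨v, hv⟩
      simp only [Fin.val_mk] at h1
      have he : T.filter (fun x => x.val / r = v)
          = T ∩ Finset.univ.filter (fun x => x.val / r = v) := by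
        ext x; simp
      rw [he]; omega
    have hsum1 : ∑ v ∈ Finset.range (a - 1), (T.filter (fun x => x.val / r = v)).card
        ≤ c := by
      calc _ ≤ ∑ _v ∈ Finset.range (a - 1), (k - 1) := Finset.sum_le_sum hbound
        _ = c := by rw [Finset.sum_const, Finset.card_range, smul_eq_mul, hc]
    have hlast : (T.filter (fun x => x.val / r = a - 1)).card ≤ r - c - 1 := by
      have hsub : T.filter (fun x => x.val / r = a - 1)
          ⊆ (Finset.Ico ((a - 1) * r) n).attachFin (fun m hm => by
              simp only [Finset.mem_Ico] at hm; omega) := by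
        intro x hx
        simp only [Finset.mem_filter] at hx
        rw [Finset.mem_attachFin, Finset.mem_Ico]
        have := (div_eq_iff_aux hrpos).1 hx.2
        exact ⟨this.1, x.isLt⟩
      have e2 : (a - 1) * r = r * (a - 1) := Nat.mul_comm _ _
      calc _ ≤ _ := Finset.card_le_card hsub
        _ = n - (a - 1) * r := by rw [Finset.card_attachFin, Nat.card_Ico]
        _ ≤ r - c - 1 := by omega
    omega
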